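/- Let σ be a Dynkin automorphism of a simply-laced root system with simple coroots α_i^∨, i ∈ I, and for a σ-orbit η define α_η^∨ = 2^h Σ_{i∈η} α_i^∨ where h = 1 if η = {i,j} with ⟨α_i^∨, α_j⟩ = -1 and h = 0 otherwise. Then for each orbit η, the reflection s_η (the longest element of the parabolic generated by {s_i : i ∈ η}) acts on the σ-fixed coweight lattice X_*^σ by μ ↦ μ - ⟨μ, α_η⟩ α_η^∨, where α_η is the common restriction of α_i (i ∈ η) to X_*^σ. -/

import Mathlib

/- STATEMENT 10: Let σ be a Dynkin automorphism of a simply-laced root datum with simple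
coroots α_i^∨ and simple roots α_i (regarded as linear functionals on the coweight lattice
X_*).  For a σ-orbit η define α_η^∨ = 2^h Σ_{i∈η} α_i^∨, where h = 1 if η = {i,j} with
⟨α_i^∨, α_j⟩ = -1 and h = 0 otherwise.  Then s_η (the longest element of the parabolic
generated by {s_i : i ∈ η}) acts on the σ-fixed coweight lattice X_*^σ by
μ ↦ μ - ⟨μ, α_η⟩ α_η^∨, where ⟨μ, α_η⟩ = ⟨μ, α_i⟩ for any i ∈ η. -/

theorem stmt10 {X : Type*} [AddCommGroup X] [Module ℤ X]
    {I : Type*} [Fintype I] [DecidableEq I]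
    (α : I → (X →ₗ[ℤ] ℤ)) (αv : I → X)
    (hdiag : ∀ i, α i (αv i) = 2)
    (hlaced : ∀ i j, i ≠ j → α j (αv i) = 0 ∨ α j (αv i) = -1)  -- simply laced
    (s : I → (X →ₗ[ℤ] X))
    (hs : ∀ i μ, s i μ = μ - α i μ • αv i)
    (σI : Equiv.Perm I) (σX : X ≃ₗ[ℤ] X)
    (hσv : ∀ i, σX (αv i) = αv (σI i))
    (hσα : ∀ i μ, α (σI i) (σX μ) = α i μ)
    (η : Finset I)
    (horb : ∃ i₀ ∈ η, ∀ i, i ∈ η ↔ ∃ n : ℕ, (⇑σI)^[n] i₀ = i)  -- η is a σ-orbit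
    (sη : X →ₗ[ℤ] X) (αηv : X)
    -- s_η is the longest element of the parabolic generated by {s_i : i ∈ η}, and
    -- α_η^∨ = 2^h Σ_{i∈η} α_i^∨ :
    (hcase :
      (∃ i j, i ≠ j ∧ η = {i, j} ∧ α j (αv i) = -1 ∧
        sη = s i ∘ₗ s j ∘ₗ s i ∧ αηv = (2 : ℤ) • ∑ k ∈ η, αv k)    -- h = 1
      ∨ ((∀ i ∈ η, ∀ j ∈ η, i ≠ j → α j (αv i) = 0) ∧
        (∃ l : List I, l.Nodup ∧ l.toFinset = η ∧ sη = (l.map s).prod) ∧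
        αηv = ∑ k ∈ η, αv k)) :                                     -- h = 0
    ∀ μ : X, σX μ = μ → ∀ i ∈ η, sη μ = μ - α i μ • αηv := by

  intro μ hμ i hi
  obtain ⟨i₀, hi₀, hch⟩ := horb
  -- α is constant on η at σ-fixed μ
  have key : ∀ k, α (σI k) μ = α k μ := fun k => by
    have := hσα k μ; rwa [hμ] at this
  have iter : ∀ n k, α ((⇑σI)^[n] k) μ = α k μ := by
    intro n; induction n with
    | zero => simp
    | succ n ih => intro k; rw [Function.iterate_succ_apply', key, ih]
  have const : ∀ j ∈ η, α j μ = α i μ := by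
    intro j hj
    obtain ⟨n, hn⟩ := (hch j).1 hj
    obtain ⟨m, hm⟩ := (hch i).1 hi
    rw [← hn, ← hm, iter, iter]
  have clos : ∀ k ∈ η, σI k ∈ η := by
    intro k hk
    obtain ⟨n, hn⟩ := (hch k).1 hk
    exact (hch _).2 ⟨n + 1, by rw [Function.iterate_succ_apply', hn]⟩
  rcases hcase with ⟨a, b, hab, hset, hm1, hsη, hαv⟩ |
      ⟨horth, ⟨l, hnd, hlη, hsη⟩, hαv⟩
  · -- case h = 1
    have haη : a ∈ η := by rw [hset]; exact Finset.mem_insert_self a {b}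
    have hbη : b ∈ η := by
      rw [hset]; exact Finset.mem_insert_of_mem (Finset.mem_singleton_self b)
    -- equivariance of the pairing
    have equivp : ∀ k k', α (σI k) (αv (σI k')) = α k (αv k') := fun k k' => by
      rw [← hσv]; exact hσα k (αv k')
    -- σI swaps a and b
    have hmem : ∀ k ∈ η, k = a ∨ k = b := by
      intro k hk; rw [hset] at hk
      rcases Finset.mem_insert.1 hk with h | h
      · exact Or.inl h
      · exact Or.inr (Finset.mem_singleton.1 h)
    have hswap : σI a = b ∧ σI b = a := by
      rcases hmem _ (clos a haη) with ha | ha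
      · -- σI a = a : contradiction
        exfalso
        have hb : σI b = b := by
          rcases hmem _ (clos b hbη) with h | h
          · exact absurd (σI.injective (h.trans ha.symm)) hab.symm
          · exact h
        have hfix : ∀ p, (⇑σI)^[p] i₀ = i₀ := by
          rcases hmem _ hi₀ with h0 | h0 <;> subst h0
          · exact fun p => Function.iterate_fixed ha p
          · exact fun p => Function.iterate_fixed hb p
        obtain ⟨n, hn⟩ := (hch a).1 haη
        obtain ⟨m, hm⟩ := (hch b).1 hbη
        exact hab (((hfix n).symm.trans hn).symm.trans ((hfix m).symm.trans hm))
      · refine ⟨ha, ?_⟩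
        rcases hmem _ (clos b hbη) with h | h
        · exact h
        · exact absurd (σI.injective (ha.trans h.symm)) hab
    have hpair : α a (αv b) = -1 := by
      have := equivp b a
      rw [hswap.1, hswap.2] at this
      rw [this, hm1]
    set c := α i μ with hc
    have hca : α a μ = c := const a haη
    have hcb : α b μ = c := const b hbη
    have hsum : ∑ k ∈ η, αv k = αv a + αv b := by
      rw [hset, Finset.sum_pair hab]
    have e1 : s a μ = μ - c • αv a := by rw [hs, hca]
    have vb : α b (μ - c • αv a) = 2 * c := by
      rw [map_sub, map_zsmul, hm1, hcb, smul_eq_mul]; ring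
    have e2 : s b (s a μ) = μ - c • αv a - (2 * c) • αv b := by
      rw [e1, hs, vb]
    have va : α a (μ - c • αv a - (2 * c) • αv b) = c := by
      rw [map_sub, map_sub, map_zsmul, map_zsmul, hca,
        hdiag, hpair, smul_eq_mul, smul_eq_mul]; ring
    rw [hsη, hαv, hsum]
    simp only [LinearMap.comp_apply]
    rw [hs (i := a) (μ := (s b) ((s a) μ)), e2, va]
    simp only [← Int.cast_smul_eq_zsmul ℤ, Int.cast_id]
    module
  · -- case h = 0
    have hsub : ∀ k ∈ l, k ∈ η := fun k hk => hlη ▸ List.mem_toFinset.2 hk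
    have main : ∀ L : List I, L.Nodup → (∀ k ∈ L, k ∈ η) →
        ((L.map s).prod) μ = μ - (L.map (fun k => α k μ • αv k)).sum := by
      intro L
      induction L with
      | nil => simp
      | cons k t ih =>
        intro hnd hsubL
        have hkη : k ∈ η := hsubL k (List.mem_cons_self)
        have htη : ∀ k' ∈ t, k' ∈ η := fun k' hk' => hsubL k' (List.mem_cons_of_mem k hk')
        rw [List.map_cons, List.prod_cons, Module.End.mul_apply,
          ih hnd.of_cons htη, hs, map_sub]
        have hz : α k ((t.map (fun k => α k μ • αv k)).sum) = 0 := by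
          rw [map_list_sum]
          apply List.sum_eq_zero
          intro x hx
          simp only [List.map_map, List.mem_map, Function.comp] at hx
          obtain ⟨k', hk', rfl⟩ := hx
          have hne : k' ≠ k := fun h => (List.nodup_cons.1 hnd).1 (h ▸ hk')
          rw [map_zsmul, smul_eq_mul, horth k' (htη k' hk') k hkη hne, mul_zero]
        rw [hz, sub_zero, List.map_cons, List.sum_cons]
        abel
    rw [hsη, main l hnd hsub, hαv]
    have h1 : (l.map (fun k => α k μ • αv k)).sum = ∑ k ∈ l.toFinset, α k μ • αv k :=
      (List.sum_toFinset _ hnd).symm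
    have h2 : (∑ k ∈ η, α k μ • αv k) = ∑ k ∈ η, α i μ • αv k :=
      Finset.sum_congr rfl fun k hk => by rw [const k hk]
    have h3 : ∀ S : Finset I, ∑ k ∈ S, α i μ • αv k = α i μ • ∑ k ∈ S, αv k := by
      intro S
      induction S using Finset.induction_on with
      | empty => simp [← Int.cast_smul_eq_zsmul ℤ]
      | insert _ _ h ih =>
        simp only [← Int.cast_smul_eq_zsmul ℤ, Int.cast_id] at ih ⊢
        rw [Finset.sum_insert h, Finset.sum_insert h, ih, smul_add]
    rw [h1, hlη, h2, h3]
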